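/- Let H ⊆ GL(V) be a finite group, L an H-invariant full lattice in V, and W ⊆ V an H-invariant L-generated subspace. Then there exists a complement W' of W in V that is both L-generated and H-invariant. -/

import Mathlib

lemma exists_rat_proj {V : Type*} [AddCommGroup V] [Module ℝ V] [FiniteDimensional ℝ V]
    {n : ℕ} (L : AddSubgroup V) (b : Module.Basis (Fin n) ℝ V)
    (hb : AddSubgroup.closure (Set.range ⇑b) = L)
    (W : Submodule ℝ V)
    (hWgen : Submodule.span ℝ ((W : Set V) ∩ (L : Set V)) = W) :
    ∃ (q : V →ₗ[ℝ] V) (m : ℕ), 0 < m ∧ (∀ x, q x ∈ W) ∧ (∀ w ∈ W, q w = w) ∧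
      (∀ l ∈ L, m • q l ∈ L) := by
  classical
  set ι : (Fin n → ℚ) → V := fun v => ∑ i, (v i : ℝ) • b i with hι
  have ι_add : ∀ v w, ι (v + w) = ι v + ι w := by
    intro v w
    simp [hι, add_smul, Finset.sum_add_distrib]
  have ι_smul : ∀ (c : ℚ) v, ι (c • v) = (c : ℝ) • ι v := by
    intro c v
    simp [hι, Finset.smul_sum, mul_smul]
  have ι_int_mem : ∀ c : Fin n → ℤ, ι (fun i => (c i : ℚ)) ∈ L := by
    intro c
    rw [← hb]
    refine AddSubgroup.sum_mem _ fun i _ => ?_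
    simp only [Rat.cast_intCast, Int.cast_smul_eq_zsmul ℝ]
    exact zsmul_mem (AddSubgroup.subset_closure (Set.mem_range_self i)) _
  have mem_L : ∀ l ∈ L, ∃ c : Fin n → ℤ, ι (fun i => (c i : ℚ)) = l := by
    intro l hl
    have : l ∈ (Submodule.span ℤ (Set.range ⇑b)).toAddSubgroup := by
      rw [← hb] at hl
      exact AddSubgroup.closure_le _ |>.mpr
        (fun x hx => by simpa using Submodule.subset_span (R := ℤ) hx) hl
    obtain ⟨c, hc⟩ := (Submodule.mem_span_range_iff_exists_fun ℤ).mp this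
    refine ⟨c, ?_⟩
    rw [← hc]
    simp only [hι, Rat.cast_intCast, Int.cast_smul_eq_zsmul]
  set WQ : Submodule ℚ (Fin n → ℚ) :=
    { carrier := {v | ι v ∈ W}
      add_mem' := fun hv hw => by simpa [ι_add] using add_mem hv hw
      zero_mem' := by simp [hι]
      smul_mem' := fun c v hv => by simpa [ι_smul] using Submodule.smul_mem _ _ hv } with hWQ
  obtain ⟨UQ, hUQ⟩ := Submodule.exists_isCompl WQ
  set P : (Fin n → ℚ) →ₗ[ℚ] (Fin n → ℚ) :=
    WQ.subtype ∘ₗ (WQ.linearProjOfIsCompl UQ hUQ) with hP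
  have hPmem : ∀ v, P v ∈ WQ := fun v => (WQ.linearProjOfIsCompl UQ hUQ v).2
  have hPid : ∀ v ∈ WQ, P v = v := by
    intro v hv
    simp [hP, Submodule.linearProjOfIsCompl_apply_left hUQ ⟨v, hv⟩]
    exact congrArg Subtype.val (Submodule.linearProjOfIsCompl_apply_left hUQ ⟨v, hv⟩)
  set e : Fin n → (Fin n → ℚ) := fun i => Pi.single i (1 : ℚ) with he
  set q : V →ₗ[ℝ] V := b.constr ℝ fun i => ι (P (e i)) with hq
  have hqb : ∀ i, q (b i) = ι (P (e i)) := fun i => b.constr_basis ℝ _ i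
  have key : ∀ v, q (ι v) = ι (P v) := by
    intro v
    have hv : v = ∑ i, v i • e i := by
      funext j
      simp [he, Finset.sum_apply, Pi.single_apply]
    have ι_sum : ∀ (s : Finset (Fin n)) (f : Fin n → (Fin n → ℚ)),
        ι (∑ x ∈ s, f x) = ∑ x ∈ s, ι (f x) := by
      intro s f
      induction s using Finset.induction with
      | empty => simp [hι]
      | insert _ _ h ih => rw [Finset.sum_insert h, Finset.sum_insert h, ι_add, ih]
    have l1 : q (ι v) = ∑ i, (v i : ℝ) • ι (P (e i)) := by
      simp only [hι, map_sum, map_smul, hqb]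
    have l2 : ι (P v) = ∑ i, (v i : ℝ) • ι (P (e i)) := by
      conv_lhs => rw [hv]
      rw [map_sum, ι_sum]
      exact Finset.sum_congr rfl fun i _ => by rw [map_smul, ι_smul]
    rw [l1, l2]
  have hqW : ∀ x, q x ∈ W := by
    intro x
    have hx : x ∈ Submodule.span ℝ (Set.range ⇑b) := by rw [b.span_eq]; trivial
    induction hx using Submodule.span_induction with
    | mem x hx => obtain ⟨i, rfl⟩ := hx; rw [hqb]; exact hPmem (e i)
    | zero => simp [W.zero_mem]
    | add x y _ _ hx hy => rw [map_add]; exact add_mem hx hy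
    | smul c x _ hx => rw [map_smul]; exact Submodule.smul_mem _ _ hx
  have hqid : ∀ w ∈ W, q w = w := by
    intro w hw
    rw [← hWgen] at hw
    induction hw using Submodule.span_induction with
    | mem x hx =>
      obtain ⟨hxW, hxL⟩ := hx
      obtain ⟨c, hc⟩ := mem_L x hxL
      have hcWQ : (fun i => (c i : ℚ)) ∈ WQ := by
        show ι _ ∈ W; rw [hc]; exact hxW
      rw [← hc, key, hPid _ hcWQ]
    | zero => simp
    | add x y _ _ hx hy => rw [map_add, hx, hy]
    | smul c x _ hx => rw [map_smul, hx]
  -- common denominator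
  set m : ℕ := ∏ i, ∏ j, (P (e i) j).den with hm
  have hmpos : 0 < m :=
    Finset.prod_pos fun i _ => Finset.prod_pos fun j _ => (P (e i) j).pos
  have hden : ∀ i j, ∃ z : ℤ, (z : ℚ) = (m : ℚ) * P (e i) j := by
    intro i j
    have ha : (P (e i) j).den ∣ ∏ j', (P (e i) j').den :=
      Finset.dvd_prod_of_mem _ (Finset.mem_univ j)
    have hbb : (∏ j', (P (e i) j').den) ∣ m :=
      Finset.dvd_prod_of_mem (fun i' => ∏ j', (P (e i') j').den) (Finset.mem_univ i)
    have h1 : (P (e i) j).den ∣ m := ha.trans hbb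
    obtain ⟨k, hk⟩ := h1
    refine ⟨(P (e i) j).num * k, ?_⟩
    push_cast [hk]
    rw [mul_comm ((P (e i) j).den : ℚ) (k : ℚ), mul_assoc, Rat.den_mul_eq_num]
    ring
  have hmqb : ∀ i, m • q (b i) ∈ L := by
    intro i
    obtain ⟨z, hz⟩ := Classical.axiomOfChoice (hden i)
    have h1 : (m : ℚ) • P (e i) = fun j => ((z j : ℚ)) := by
      funext j; simp [Pi.smul_apply, smul_eq_mul, ← hz j]
    have h2 : m • q (b i) = ι ((m : ℚ) • P (e i)) := by
      rw [hqb, ι_smul]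
      rw [show ((m : ℚ) : ℝ) = (m : ℝ) by push_cast; ring, Nat.cast_smul_eq_nsmul]
    rw [h2, h1]
    exact ι_int_mem z
  have hmqL : ∀ l ∈ L, m • q l ∈ L := by
    have hle : AddSubgroup.closure (Set.range ⇑b) ≤
        AddSubgroup.comap ((m • q : V →ₗ[ℝ] V).toAddMonoidHom) L := by
      refine AddSubgroup.closure_le _ |>.mpr ?_
      rintro x ⟨i, rfl⟩
      simpa using hmqb i
    intro l hl
    rw [← hb] at hl
    simpa using hle hl
  exact ⟨q, m, hmpos, hqW, hqid, hmqL⟩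

/-- If H ⊆ GL(V) is a finite group, L an H-invariant full lattice, and W an
H-invariant L-generated subspace, then W has a complement W' that is both
L-generated and H-invariant. -/
theorem stmt_10 {V : Type*} [AddCommGroup V] [Module ℝ V] [FiniteDimensional ℝ V]
    (H : Subgroup (V ≃ₗ[ℝ] V)) [Finite H]
    (L : AddSubgroup V)
    (hL : ∃ b : Module.Basis (Fin (Module.finrank ℝ V)) ℝ V,
      AddSubgroup.closure (Set.range ⇑b) = L)
    (hLinv : ∀ h ∈ H, ⇑h '' (L : Set V) = L)
    (W : Submodule ℝ V)
    (hWinv : ∀ h ∈ H, ⇑h '' (W : Set V) = W)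
    (hWgen : Submodule.span ℝ ((W : Set V) ∩ (L : Set V)) = W) :
    ∃ W' : Submodule ℝ V, IsCompl W W' ∧
      Submodule.span ℝ ((W' : Set V) ∩ (L : Set V)) = W' ∧
      ∀ h ∈ H, ⇑h '' (W' : Set V) = W' := by
  classical
  obtain ⟨b, hb⟩ := hL
  obtain ⟨q, m, hmpos, hqW, hqid, hmqL⟩ := exists_rat_proj L b hb W hWgen
  haveI : Fintype H := Fintype.ofFinite H
  set N : ℕ := Fintype.card H with hN
  have hNpos : 0 < N := Fintype.card_pos
  -- membership helpers
  have hLmem : ∀ (a : H), ∀ l ∈ L, (a : V ≃ₗ[ℝ] V) l ∈ L := by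
    intro a l hl
    have h1 := hLinv (a : V ≃ₗ[ℝ] V) a.2
    have h2 : (a : V ≃ₗ[ℝ] V) l ∈ ⇑(a : V ≃ₗ[ℝ] V) '' (L : Set V) := ⟨l, hl, rfl⟩
    rw [h1] at h2
    exact h2
  have hWmem : ∀ (a : H), ∀ w ∈ W, (a : V ≃ₗ[ℝ] V) w ∈ W := by
    intro a w hw
    have h1 := hWinv (a : V ≃ₗ[ℝ] V) a.2
    have h2 : (a : V ≃ₗ[ℝ] V) w ∈ ⇑(a : V ≃ₗ[ℝ] V) '' (W : Set V) := ⟨w, hw, rfl⟩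
    rw [h1] at h2
    exact h2
  have hco : ∀ (a c : H) (x : V), ((a * c : H) : V ≃ₗ[ℝ] V) x
      = (a : V ≃ₗ[ℝ] V) ((c : V ≃ₗ[ℝ] V) x) := fun a c x => rfl
  have hinv : ∀ (a : H) (x : V), (a : V ≃ₗ[ℝ] V) (((a⁻¹ : H) : V ≃ₗ[ℝ] V) x) = x := by
    intro a x
    rw [← hco, mul_inv_cancel]
    rfl
  have hinv' : ∀ (a : H) (x : V), ((a⁻¹ : H) : V ≃ₗ[ℝ] V) ((a : V ≃ₗ[ℝ] V) x) = x := by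
    intro a x
    rw [← hco, inv_mul_cancel]
    rfl
  set F : H → (V →ₗ[ℝ] V) := fun h =>
    (h : V ≃ₗ[ℝ] V).toLinearMap ∘ₗ q ∘ₗ ((h⁻¹ : H) : V ≃ₗ[ℝ] V).toLinearMap with hF
  set p : V →ₗ[ℝ] V := ∑ h : H, F h with hp
  have hpapp : ∀ x, p x = ∑ h : H, (h : V ≃ₗ[ℝ] V) (q (((h⁻¹ : H) : V ≃ₗ[ℝ] V) x)) := by
    intro x
    rw [hp, LinearMap.sum_apply]
    rfl
  have hpW : ∀ x, p x ∈ W := by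
    intro x
    rw [hpapp]
    exact Submodule.sum_mem _ fun h _ => hWmem h _ (hqW _)
  have hpid : ∀ w ∈ W, p w = N • w := by
    intro w hw
    rw [hpapp]
    have : ∀ h : H, (h : V ≃ₗ[ℝ] V) (q (((h⁻¹ : H) : V ≃ₗ[ℝ] V) w)) = w := by
      intro h
      rw [hqid _ (hWmem h⁻¹ _ hw), hinv]
    rw [Finset.sum_congr rfl fun h _ => this h, Finset.sum_const, Finset.card_univ]
  have hcomm : ∀ (a : H) (x : V), p ((a : V ≃ₗ[ℝ] V) x) = (a : V ≃ₗ[ℝ] V) (p x) := by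
    intro a x
    rw [hpapp, hpapp, map_sum]
    refine (Fintype.sum_equiv (Equiv.mulLeft a)
      (fun h => (a : V ≃ₗ[ℝ] V) ((h : V ≃ₗ[ℝ] V) (q (((h⁻¹ : H) : V ≃ₗ[ℝ] V) x))))
      (fun h => (h : V ≃ₗ[ℝ] V) (q (((h⁻¹ : H) : V ≃ₗ[ℝ] V) ((a : V ≃ₗ[ℝ] V) x))))
      ?_).symm
    intro h
    simp only [Equiv.coe_mulLeft]
    have e2 : (((a * h)⁻¹ : H) : V ≃ₗ[ℝ] V) ((a : V ≃ₗ[ℝ] V) x)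
        = ((h⁻¹ : H) : V ≃ₗ[ℝ] V) x := by
      rw [mul_inv_rev, hco, hinv']
    rw [e2, hco]
  have hpL : ∀ l ∈ L, m • p l ∈ L := by
    intro l hl
    have : m • p l = ∑ h : H,
        (h : V ≃ₗ[ℝ] V) (m • q (((h⁻¹ : H) : V ≃ₗ[ℝ] V) l)) := by
      rw [hpapp, Finset.smul_sum]
      exact Finset.sum_congr rfl fun h _ => (map_nsmul _ _ _).symm
    rw [this]
    exact AddSubgroup.sum_mem _ fun h _ => hLmem h _ (hmqL _ (hLmem h⁻¹ _ hl))
  refine ⟨LinearMap.ker p, ⟨?_, ?_⟩, ?_, ?_⟩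
  · -- disjoint
    rw [Submodule.disjoint_def]
    intro x hxW hxK
    have h1 : (N : ℝ) • x = 0 := by
      rw [Nat.cast_smul_eq_nsmul, ← hpid x hxW]
      exact hxK
    rcases smul_eq_zero.mp h1 with h | h
    · exact absurd h (by positivity)
    · exact h
  · -- codisjoint
    rw [codisjoint_iff, eq_top_iff]
    intro x _
    have hker : x - (N : ℝ)⁻¹ • p x ∈ LinearMap.ker p := by
      rw [LinearMap.mem_ker, map_sub, map_smul, hpid _ (hpW x),
        ← Nat.cast_smul_eq_nsmul ℝ, inv_smul_smul₀ (by positivity), sub_self]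
    exact Submodule.mem_sup.mpr ⟨(N : ℝ)⁻¹ • p x, Submodule.smul_mem _ _ (hpW x),
      x - (N : ℝ)⁻¹ • p x, hker, by ring_nf; exact add_sub_cancel _ _⟩
  · -- span condition
    refine le_antisymm (Submodule.span_le.mpr fun x hx => hx.1) ?_
    intro x hx
    set u : Fin (Module.finrank ℝ V) → V := fun i => (m * N) • b i - m • p (b i) with hu
    have hbL : ∀ i, b i ∈ L := fun i => hb ▸ AddSubgroup.subset_closure (Set.mem_range_self i)
    have huK : ∀ i, u i ∈ LinearMap.ker p := by
      intro i
      rw [LinearMap.mem_ker, hu]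
      simp only [map_sub, map_nsmul]
      rw [hpid _ (hpW (b i)), smul_smul, mul_comm m N, sub_self]
    have huL : ∀ i, u i ∈ L := fun i =>
      sub_mem (AddSubgroup.nsmul_mem _ (hbL i) _) (hpL _ (hbL i))
    have hsum : ∑ i, b.repr x i • u i = ((m * N : ℕ) : ℝ) • x := by
      have e1 : ∀ i, b.repr x i • u i
          = (m * N) • (b.repr x i • b i) - m • (b.repr x i • p (b i)) := by
        intro i
        rw [hu]
        simp only [smul_sub, smul_comm (b.repr x i)]
      simp_rw [e1]
      rw [Finset.sum_sub_distrib, ← Finset.smul_sum, ← Finset.smul_sum, b.sum_repr]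
      have e2 : ∑ i, b.repr x i • p (b i) = p x := by
        conv_rhs => rw [← b.sum_repr x]
        rw [map_sum]
        exact Finset.sum_congr rfl fun i _ => (map_smul p _ _).symm
      rw [e2, LinearMap.mem_ker.mp hx, smul_zero, sub_zero, Nat.cast_smul_eq_nsmul]
    have hmN : ((m * N : ℕ) : ℝ) ≠ 0 := by positivity
    have : x = ((m * N : ℕ) : ℝ)⁻¹ • ∑ i, b.repr x i • u i := by
      rw [hsum, inv_smul_smul₀ hmN]
    rw [this]
    refine Submodule.smul_mem _ _ (Submodule.sum_mem _ fun i _ => ?_)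
    exact Submodule.smul_mem _ _ (Submodule.subset_span ⟨huK i, huL i⟩)
  · -- H-invariance
    intro h hh
    set a : H := ⟨h, hh⟩ with ha
    apply Set.eq_of_subset_of_subset
    · rintro _ ⟨y, hy, rfl⟩
      have : p ((a : V ≃ₗ[ℝ] V) y) = 0 := by
        rw [hcomm a y, show p y = 0 from hy, map_zero]
      exact this
    · intro x hxK
      refine ⟨((a⁻¹ : H) : V ≃ₗ[ℝ] V) x, ?_, hinv a x⟩
      show p _ = 0
      rw [hcomm a⁻¹ x, show p x = 0 from hxK, map_zero]
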